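/- Let X ∈ ℝ^{d_in×n}, Y ∈ ℝ^{d_out×n}, σ: ℝ → ℝ applied entrywise, r ∈ ℕ, ε ≥ 0, t ≥ 0, and k ∈ ℕ. Suppose A_T ∈ ℝ^{r×d_in}, B_T ∈ ℝ^{d_out×r} and a matrix G ∈ ℝ^{d_out×n} satisfy ‖Y − B_T σ(A_T X) − G‖₂ ≤ ε and ‖G‖₂ ≤ t, and suppose the infimum E_σ(r) is attained at (A*, B*). Then ‖B_T σ(A_T X) − B* σ(A* X)‖_F ≤ √(r + k) · (t + ε + s_{k+1}(Y)) + s_{>k}(Y) + E_σ(r). -/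

import Mathlib

open scoped BigOperators

namespace CoLA

noncomputable section

/-- Frobenius norm of a real matrix. -/
def frobNorm {m n : ℕ} (M : Matrix (Fin m) (Fin n) ℝ) : ℝ :=
  Real.sqrt (∑ i, ∑ j, (M i j) ^ 2)

/-- Entrywise application of `σ` to a matrix. -/
def entrywise (σ : ℝ → ℝ) {m n : ℕ} (M : Matrix (Fin m) (Fin n) ℝ) :
    Matrix (Fin m) (Fin n) ℝ :=
  Matrix.of fun i j => σ (M i j)

/-- `E_σ(r)`. -/
def Esig (σ : ℝ → ℝ) {din dout n : ℕ} (X : Matrix (Fin din) (Fin n) ℝ)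
    (Y : Matrix (Fin dout) (Fin n) ℝ) (r : ℕ) : ℝ :=
  ⨅ (A : Matrix (Fin r) (Fin din) ℝ), ⨅ (B : Matrix (Fin dout) (Fin r) ℝ),
    frobNorm (Y - B * entrywise σ (A * X))

/-- `E_id(r)`. -/
def Eid {din dout n : ℕ} (X : Matrix (Fin din) (Fin n) ℝ)
    (Y : Matrix (Fin dout) (Fin n) ℝ) (r : ℕ) : ℝ :=
  ⨅ (A : Matrix (Fin r) (Fin din) ℝ), ⨅ (B : Matrix (Fin dout) (Fin r) ℝ),
    frobNorm (Y - B * A * X)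

/-- The (unsorted) singular values of `M`: square roots of eigenvalues of `Mᴴ * M`. -/
def svAux {m n : ℕ} (M : Matrix (Fin m) (Fin n) ℝ) : Fin n → ℝ :=
  fun i => Real.sqrt ((show (Matrix.transpose M * M).IsHermitian by
    rw [← Matrix.conjTranspose_eq_transpose_of_trivial]
    exact Matrix.isHermitian_conjTranspose_mul_self M).eigenvalues i)

/-- Singular values of `M` sorted in non-increasing order (0-indexed). -/
def sv {m n : ℕ} (M : Matrix (Fin m) (Fin n) ℝ) : Fin n → ℝ :=
  fun i => svAux M (Tuple.sort (fun j => -(svAux M j)) i)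

/-- `k`-th largest singular value (1-indexed, `0` for `k > n`). -/
def sVal {m n : ℕ} (M : Matrix (Fin m) (Fin n) ℝ) (k : ℕ) : ℝ :=
  if h : k - 1 < n then sv M ⟨k - 1, h⟩ else 0

/-- `s_{>k}(M) = √(∑_{j>k} s_j(M)²)` (with `j` 1-indexed). -/
def sGt {m n : ℕ} (M : Matrix (Fin m) (Fin n) ℝ) (k : ℕ) : ℝ :=
  Real.sqrt (∑ j : Fin n, if k ≤ (j : ℕ) then (sv M j) ^ 2 else 0)

/-- Spectral (ℓ²-operator) norm of a real matrix. -/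
def specNorm {m n : ℕ} (M : Matrix (Fin m) (Fin n) ℝ) : ℝ :=
  ‖LinearMap.toContinuousLinearMap (Matrix.toEuclideanLin M)‖

/-- Effective rank `r_α(M)`: the least `k` with `∑_{i≤k} s_i² ≥ α ∑_i s_i²`. -/
def effRank {m n : ℕ} (M : Matrix (Fin m) (Fin n) ℝ) (α : ℝ) : ℕ :=
  sInf {k : ℕ |
    α * ∑ i : Fin n, (sv M i) ^ 2 ≤ ∑ i : Fin n, if (i : ℕ) < k then (sv M i) ^ 2 else 0}

/-- Row space of `X` inside `Fin n → ℝ`. -/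
def rowSpace {d n : ℕ} (X : Matrix (Fin d) (Fin n) ℝ) : Submodule ℝ (Fin n → ℝ) :=
  Submodule.span ℝ (Set.range X)

/-- Row space of `X` as a submodule of Euclidean space. -/
def rowSpaceE {d n : ℕ} (X : Matrix (Fin d) (Fin n) ℝ) :
    Submodule ℝ (EuclideanSpace ℝ (Fin n)) :=
  Submodule.span ℝ (Set.range fun i => (WithLp.equiv 2 (Fin n → ℝ)).symm (X i))

/-- Row-wise orthogonal projection of the rows of `Y` onto the subspace `S`. -/
def projRows {dout n : ℕ} (S : Submodule ℝ (EuclideanSpace ℝ (Fin n)))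
    (Y : Matrix (Fin dout) (Fin n) ℝ) : Matrix (Fin dout) (Fin n) ℝ :=
  Matrix.of fun i => WithLp.equiv 2 (Fin n → ℝ)
    ((S.orthogonalProjectionOnto ((WithLp.equiv 2 (Fin n → ℝ)).symm (Y i)) :
      EuclideanSpace ℝ (Fin n)))

/-- Row-wise orthogonal projection onto the orthogonal complement of `span{v}`. -/
def projVperp {dout n : ℕ} (v : Fin n → ℝ) (Y : Matrix (Fin dout) (Fin n) ℝ) :
    Matrix (Fin dout) (Fin n) ℝ :=
  projRows (Submodule.span ℝ {(WithLp.equiv 2 (Fin n → ℝ)).symm v})ᗮ Y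


section StmtFourHelpers

open Matrix Finset

variable {m n dout din : ℕ}

/-- Pi function as an element of Euclidean space. -/
abbrev toE {n : ℕ} (x : Fin n → ℝ) : EuclideanSpace ℝ (Fin n) :=
  (WithLp.linearEquiv 2 ℝ (Fin n → ℝ)).symm x

@[simp] lemma toE_apply (x : Fin n → ℝ) (j : Fin n) : toE x j = x j := rfl

lemma norm_toE_sq (x : Fin n → ℝ) : ‖toE x‖ ^ 2 = ∑ j, x j ^ 2 := by
  rw [EuclideanSpace.norm_eq, Real.sq_sqrt (by positivity)]
  simp [sq_abs]

lemma inner_toE (x y : Fin n → ℝ) :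
    (inner ℝ (toE x) (toE y) : ℝ) = ∑ j, x j * y j := by
  simp [PiLp.inner_apply, RCLike.inner_apply, mul_comm]

/-- Matrix as a long Euclidean vector (for Frobenius norm facts). -/
def mat2E (M : Matrix (Fin m) (Fin n) ℝ) : EuclideanSpace ℝ (Fin m × Fin n) :=
  (WithLp.linearEquiv 2 ℝ (Fin m × Fin n → ℝ)).symm (fun p => M p.1 p.2)

lemma frobNorm_eq_norm (M : Matrix (Fin m) (Fin n) ℝ) : frobNorm M = ‖mat2E M‖ := by
  rw [EuclideanSpace.norm_eq]
  unfold frobNorm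
  congr 1
  rw [Fintype.sum_prod_type]
  simp [mat2E, sq_abs]

lemma frobNorm_nonneg (M : Matrix (Fin m) (Fin n) ℝ) : 0 ≤ frobNorm M :=
  Real.sqrt_nonneg _

lemma frobNorm_sq (M : Matrix (Fin m) (Fin n) ℝ) :
    frobNorm M ^ 2 = ∑ a, ‖toE (M a)‖ ^ 2 := by
  unfold frobNorm
  rw [Real.sq_sqrt (by positivity)]
  exact Finset.sum_congr rfl fun a _ => by rw [norm_toE_sq]

lemma frobNorm_add_le (A B : Matrix (Fin m) (Fin n) ℝ) :
    frobNorm (A + B) ≤ frobNorm A + frobNorm B := by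
  rw [frobNorm_eq_norm, frobNorm_eq_norm, frobNorm_eq_norm]
  have : mat2E (A + B) = mat2E A + mat2E B := by
    unfold mat2E
    rw [← map_add]
    rfl
  rw [this]
  exact norm_add_le _ _

lemma frobNorm_neg (A : Matrix (Fin m) (Fin n) ℝ) : frobNorm (-A) = frobNorm A := by
  unfold frobNorm; congr 1; simp

lemma specNorm_nonneg (M : Matrix (Fin m) (Fin n) ℝ) : 0 ≤ specNorm M :=
  norm_nonneg _

lemma norm_mulVec_le (M : Matrix (Fin m) (Fin n) ℝ) (v : Fin n → ℝ) :
    ‖toE (M *ᵥ v)‖ ≤ specNorm M * ‖toE v‖ := by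
  have := (LinearMap.toContinuousLinearMap (Matrix.toEuclideanLin M)).le_opNorm
    ((WithLp.equiv 2 (Fin n → ℝ)).symm v)
  simpa [Matrix.toEuclideanLin_apply_piLp_toLp, specNorm] using this

lemma specNorm_le_bound (M : Matrix (Fin m) (Fin n) ℝ) {c : ℝ} (hc : 0 ≤ c)
    (h : ∀ v : Fin n → ℝ, ‖toE (M *ᵥ v)‖ ≤ c * ‖toE v‖) : specNorm M ≤ c := by
  apply ContinuousLinearMap.opNorm_le_bound _ hc
  intro x
  have := h ((WithLp.equiv 2 (Fin n → ℝ)) x)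
  simpa [Matrix.toEuclideanLin_apply_piLp_toLp, Matrix.toEuclideanLin_apply] using this

lemma specNorm_add_le (A B : Matrix (Fin m) (Fin n) ℝ) :
    specNorm (A + B) ≤ specNorm A + specNorm B := by
  unfold specNorm
  rw [map_add, map_add]
  exact norm_add_le _ _

/-- The main subspace bound: if all rows of `W` lie in a subspace `S`, then
`‖W‖_F ≤ √(dim S) ‖W‖₂`. -/
lemma frob_le_sqrt_finrank_mul_spec (W : Matrix (Fin m) (Fin n) ℝ)
    (S : Submodule ℝ (EuclideanSpace ℝ (Fin n))) (hrows : ∀ a, toE (W a) ∈ S) :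
    frobNorm W ≤ Real.sqrt (Module.finrank ℝ S) * specNorm W := by
  classical
  set d := Module.finrank ℝ S with hd
  let u : OrthonormalBasis (Fin d) ℝ S := stdOrthonormalBasis ℝ S
  have hkey : frobNorm W ^ 2 ≤ (d : ℝ) * specNorm W ^ 2 := by
    rw [frobNorm_sq]
    have hpars : ∀ a, ‖toE (W a)‖ ^ 2 =
        ∑ b, (inner ℝ ((u b : EuclideanSpace ℝ (Fin n))) (toE (W a)) : ℝ) ^ 2 := by
      intro a
      have h1 : ((⟨toE (W a), hrows a⟩ : S) : EuclideanSpace ℝ (Fin n)) = toE (W a) := rfl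
      have h2 := u.sum_inner_mul_inner (⟨toE (W a), hrows a⟩ : S) (⟨toE (W a), hrows a⟩ : S)
      have h3 : (inner ℝ (⟨toE (W a), hrows a⟩ : S) (⟨toE (W a), hrows a⟩ : S) : ℝ)
          = ‖toE (W a)‖ ^ 2 := by
        rw [real_inner_self_eq_norm_sq]
        rw [show ‖(⟨toE (W a), hrows a⟩ : S)‖ = ‖toE (W a)‖ from rfl]
      rw [← h3, ← h2]
      refine Finset.sum_congr rfl fun b _ => ?_
      rw [Submodule.coe_inner, Submodule.coe_inner, h1]
      rw [real_inner_comm (toE (W a))]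
      ring
    calc ∑ a, ‖toE (W a)‖ ^ 2
        = ∑ a, ∑ b, (inner ℝ ((u b : EuclideanSpace ℝ (Fin n))) (toE (W a)) : ℝ) ^ 2 := by
          exact Finset.sum_congr rfl fun a _ => hpars a
      _ = ∑ b, ∑ a, (inner ℝ ((u b : EuclideanSpace ℝ (Fin n))) (toE (W a)) : ℝ) ^ 2 :=
          Finset.sum_comm
      _ ≤ ∑ _b : Fin d, specNorm W ^ 2 := by
          refine Finset.sum_le_sum fun b _ => ?_
          set vb : Fin n → ℝ := (WithLp.equiv 2 (Fin n → ℝ)) (u b : EuclideanSpace ℝ (Fin n))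
            with hvb
          have hWa : ∀ a, (inner ℝ ((u b : EuclideanSpace ℝ (Fin n))) (toE (W a)) : ℝ)
              = (W *ᵥ vb) a := by
            intro a
            have : ((u b : EuclideanSpace ℝ (Fin n))) = toE vb := rfl
            rw [this, inner_toE]
            simp [Matrix.mulVec, dotProduct, mul_comm]
          calc ∑ a, (inner ℝ ((u b : EuclideanSpace ℝ (Fin n))) (toE (W a)) : ℝ) ^ 2
              = ∑ a, ((W *ᵥ vb) a) ^ 2 := Finset.sum_congr rfl fun a _ => by rw [hWa a]
            _ = ‖toE (W *ᵥ vb)‖ ^ 2 := (norm_toE_sq _).symm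
            _ ≤ (specNorm W * ‖toE vb‖) ^ 2 := by
                have h := norm_mulVec_le W vb
                exact pow_le_pow_left₀ (norm_nonneg _) h 2
            _ = specNorm W ^ 2 := by
                have : ‖toE vb‖ = 1 := by
                  have : toE vb = (u b : EuclideanSpace ℝ (Fin n)) := rfl
                  rw [this]
                  rw [show ‖(u b : EuclideanSpace ℝ (Fin n))‖ = ‖u b‖ from rfl]
                  exact u.orthonormal.1 b
                rw [this]; ring
      _ = (d : ℝ) * specNorm W ^ 2 := by simp [mul_comm]
  have h1 : frobNorm W = Real.sqrt (frobNorm W ^ 2) :=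
    (Real.sqrt_sq (frobNorm_nonneg W)).symm
  rw [h1]
  calc Real.sqrt (frobNorm W ^ 2) ≤ Real.sqrt ((d : ℝ) * specNorm W ^ 2) :=
        Real.sqrt_le_sqrt hkey
    _ = Real.sqrt (d : ℝ) * specNorm W := by
        rw [Real.sqrt_mul (by positivity), Real.sqrt_sq (specNorm_nonneg W)]

end StmtFourHelpers

section EigenHelpers

open Matrix Finset

variable {dout n : ℕ} (Y : Matrix (Fin dout) (Fin n) ℝ)

/-- The Hermitian matrix `Yᴴ Y`. -/
def hermH : (Yᴴ * Y).IsHermitian := Matrix.isHermitian_conjTranspose_mul_self Y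

/-- The sorting permutation used in `sv`. -/
def svPerm : Equiv.Perm (Fin n) := Tuple.sort (fun j => -(svAux Y j))

/-- Reordered eigenvector basis (descending eigenvalues). -/
def wvec (j : Fin n) : EuclideanSpace ℝ (Fin n) := (hermH Y).eigenvectorBasis (svPerm Y j)

/-- Reordered eigenvalues (descending). -/
def lam (j : Fin n) : ℝ := (hermH Y).eigenvalues (svPerm Y j)

lemma lam_nonneg (j : Fin n) : 0 ≤ lam Y j :=
  (Matrix.posSemidef_conjTranspose_mul_self Y).eigenvalues_nonneg _

lemma sv_eq_sqrt_lam (j : Fin n) : sv Y j = Real.sqrt (lam Y j) := rfl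

lemma sv_nonneg (j : Fin n) : 0 ≤ sv Y j := Real.sqrt_nonneg _

lemma sv_sq (j : Fin n) : sv Y j ^ 2 = lam Y j := by
  rw [sv_eq_sqrt_lam, Real.sq_sqrt (lam_nonneg Y j)]

lemma sv_antitone : Antitone (sv Y) := by
  intro i j hij
  have h := Tuple.monotone_sort (fun j => -(svAux Y j)) hij
  simp only [Function.comp_apply] at h
  have : sv Y j = svAux Y (svPerm Y j) := rfl
  rw [this, show sv Y i = svAux Y (svPerm Y i) from rfl]
  unfold svPerm
  linarith

lemma inner_wvec (i j : Fin n) :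
    (inner ℝ (wvec Y i) (wvec Y j) : ℝ) = if i = j then 1 else 0 := by
  have horth := (hermH Y).eigenvectorBasis.orthonormal
  rw [orthonormal_iff_ite] at horth
  unfold wvec
  rw [horth]
  by_cases h : i = j
  · simp [h]
  · have : svPerm Y i ≠ svPerm Y j := fun hc => h ((svPerm Y).injective hc)
    simp [h, this]

lemma mulVec_wvec (j : Fin n) :
    (Yᴴ * Y) *ᵥ ((WithLp.equiv 2 (Fin n → ℝ)) (wvec Y j)) =
      lam Y j • ((WithLp.equiv 2 (Fin n → ℝ)) (wvec Y j)) :=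
  (hermH Y).mulVec_eigenvectorBasis (svPerm Y j)

/-- Coefficients of rows of `Y` in the eigenbasis. -/
def ccoef (a : Fin dout) (j : Fin n) : ℝ :=
  (Y *ᵥ ((WithLp.equiv 2 (Fin n → ℝ)) (wvec Y j))) a

lemma sum_ccoef_mul (j j' : Fin n) :
    ∑ a, ccoef Y a j * ccoef Y a j' = if j = j' then lam Y j else 0 := by
  classical
  set vj := (WithLp.equiv 2 (Fin n → ℝ)) (wvec Y j) with hvj
  set vj' := (WithLp.equiv 2 (Fin n → ℝ)) (wvec Y j') with hvj'
  have h1 : ∑ a, ccoef Y a j * ccoef Y a j' = vj ⬝ᵥ ((Yᴴ * Y) *ᵥ vj') := by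
    unfold ccoef
    rw [show (∑ a, (Y *ᵥ vj) a * (Y *ᵥ vj') a) = (Y *ᵥ vj) ⬝ᵥ (Y *ᵥ vj') from rfl]
    rw [Matrix.dotProduct_mulVec, ← Matrix.vecMul_transpose, Matrix.vecMul_vecMul,
      Matrix.dotProduct_mulVec, Matrix.conjTranspose_eq_transpose_of_trivial]
  rw [h1, mulVec_wvec, dotProduct_smul]
  have h3 : vj ⬝ᵥ vj' = (inner ℝ (wvec Y j) (wvec Y j') : ℝ) := by
    rw [show wvec Y j = toE vj from rfl, show wvec Y j' = toE vj' from rfl, inner_toE]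
    rfl
  rw [smul_eq_mul, h3, inner_wvec]
  by_cases h : j = j' <;> simp [h]

lemma expansion (u : EuclideanSpace ℝ (Fin n)) :
    ∑ j, (inner ℝ (wvec Y j) u : ℝ) • wvec Y j = u := by
  have h := Equiv.sum_comp (svPerm Y)
    (fun i => (inner ℝ ((hermH Y).eigenvectorBasis i) u : ℝ) • (hermH Y).eigenvectorBasis i)
  rw [(hermH Y).eigenvectorBasis.sum_repr' u] at h
  exact h

lemma parseval (u : EuclideanSpace ℝ (Fin n)) :
    ∑ j, (inner ℝ (wvec Y j) u : ℝ) ^ 2 = ‖u‖ ^ 2 := by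
  have h := Equiv.sum_comp (svPerm Y)
    (fun i => (inner ℝ u ((hermH Y).eigenvectorBasis i) : ℝ) *
      (inner ℝ ((hermH Y).eigenvectorBasis i) u : ℝ))
  rw [(hermH Y).eigenvectorBasis.sum_inner_mul_inner u u] at h
  rw [← real_inner_self_eq_norm_sq, ← h]
  refine Finset.sum_congr rfl fun j _ => ?_
  rw [sq]
  congr 1
  exact real_inner_comm _ _

lemma rowY (a : Fin dout) : toE (Y a) = ∑ j, ccoef Y a j • wvec Y j := by
  have h := expansion Y (toE (Y a))
  rw [← h]
  refine Finset.sum_congr rfl fun j _ => ?_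
  congr 1

lemma normsq_combo (s : Finset (Fin n)) (coef : Fin n → ℝ) :
    ‖∑ j ∈ s, coef j • wvec Y j‖ ^ 2 = ∑ j ∈ s, coef j ^ 2 := by
  rw [← real_inner_self_eq_norm_sq, sum_inner]
  refine Finset.sum_congr rfl fun j hj => ?_
  rw [real_inner_smul_left, inner_sum]
  have h : ∀ j' ∈ s, (inner ℝ (wvec Y j) (coef j' • wvec Y j') : ℝ)
      = if j' = j then coef j else 0 := by
    intro j' _
    rw [real_inner_smul_right, inner_wvec]
    by_cases h : j' = j
    · subst h; simp
    · rw [if_neg (fun hc : j = j' => h hc.symm), if_neg h]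
      ring
  rw [Finset.sum_congr rfl h, Finset.sum_ite_eq' s j (fun _ => coef j), if_pos hj]
  ring

lemma sum_smul_apply (s : Finset (Fin n)) (c : Fin n → ℝ) (l : Fin n) :
    (∑ j ∈ s, c j • wvec Y j) l = ∑ j ∈ s, c j * wvec Y j l := by
  have h := map_sum (WithLp.linearEquiv 2 ℝ (Fin n → ℝ)) (fun j => c j • wvec Y j) s
  have h2 : (WithLp.linearEquiv 2 ℝ (Fin n → ℝ)) (∑ j ∈ s, c j • wvec Y j) l
      = ∑ j ∈ s, c j * wvec Y j l := by
    rw [h]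
    rw [Finset.sum_apply]
    refine Finset.sum_congr rfl fun j _ => ?_
    rfl
  exact h2

end EigenHelpers

section TruncHelpers

open Matrix Finset

variable {dout n : ℕ} (Y : Matrix (Fin dout) (Fin n) ℝ) (k : ℕ)

/-- Index set of the top `k` (sorted) singular values. -/
def Fk (n k : ℕ) : Finset (Fin n) := Finset.univ.filter (fun j => (j : ℕ) < k)

/-- The rank-`≤ k` truncation of `Y`. -/
def Ytrunc : Matrix (Fin dout) (Fin n) ℝ :=
  Matrix.of fun a => (WithLp.equiv 2 (Fin n → ℝ)) (∑ j ∈ Fk n k, ccoef Y a j • wvec Y j)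

lemma row_Ytrunc (a : Fin dout) :
    toE (Ytrunc Y k a) = ∑ j ∈ Fk n k, ccoef Y a j • wvec Y j := rfl

lemma row_resid (a : Fin dout) :
    toE ((Y - Ytrunc Y k) a) = ∑ j ∈ (Fk n k)ᶜ, ccoef Y a j • wvec Y j := by
  have h0 : toE ((Y - Ytrunc Y k) a) = toE (Y a) - toE (Ytrunc Y k a) := rfl
  rw [h0, rowY, row_Ytrunc,
    ← Finset.sum_add_sum_compl (Fk n k) (fun j => ccoef Y a j • wvec Y j)]
  abel

lemma frob_resid_sq :
    frobNorm (Y - Ytrunc Y k) ^ 2 = ∑ j ∈ (Fk n k)ᶜ, lam Y j := by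
  rw [frobNorm_sq]
  calc ∑ a, ‖toE ((Y - Ytrunc Y k) a)‖ ^ 2
      = ∑ a, ∑ j ∈ (Fk n k)ᶜ, ccoef Y a j ^ 2 := by
        refine Finset.sum_congr rfl fun a _ => ?_
        rw [row_resid, normsq_combo]
    _ = ∑ j ∈ (Fk n k)ᶜ, ∑ a, ccoef Y a j * ccoef Y a j := by
        rw [Finset.sum_comm]
        exact Finset.sum_congr rfl fun j _ => Finset.sum_congr rfl fun a _ => sq (ccoef Y a j) ▸ (sq (ccoef Y a j)).symm ▸ rfl
    _ = ∑ j ∈ (Fk n k)ᶜ, lam Y j := by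
        refine Finset.sum_congr rfl fun j _ => ?_
        rw [sum_ccoef_mul, if_pos rfl]

lemma frob_resid : frobNorm (Y - Ytrunc Y k) = sGt Y k := by
  have h1 : frobNorm (Y - Ytrunc Y k)
      = Real.sqrt (∑ j ∈ (Fk n k)ᶜ, lam Y j) := by
    rw [← frob_resid_sq Y k, Real.sqrt_sq (frobNorm_nonneg _)]
  rw [h1]
  unfold sGt
  congr 1
  rw [← Finset.sum_filter]
  have hset : Finset.univ.filter (fun j : Fin n => k ≤ (j : ℕ)) = (Fk n k)ᶜ := by
    ext j
    simp [Fk, not_lt]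
  rw [hset]
  exact Finset.sum_congr rfl fun j _ => (sv_sq Y j).symm

lemma sVal_nonneg : 0 ≤ sVal Y (k + 1) := by
  unfold sVal
  split
  · exact sv_nonneg Y _
  · exact le_refl 0

lemma lam_le_sVal_sq : ∀ j ∈ (Fk n k)ᶜ, lam Y j ≤ sVal Y (k + 1) ^ 2 := by
  intro j hj
  have hk : k ≤ (j : ℕ) := by
    have := Finset.mem_compl.1 hj
    simpa [Fk, not_lt] using this
  have hkn : (k + 1) - 1 < n := by
    simpa using lt_of_le_of_lt hk j.2
  unfold sVal
  rw [dif_pos hkn, ← sv_sq]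
  have hle : (⟨(k+1)-1, hkn⟩ : Fin n) ≤ j := by
    simp only [Fin.le_def]
    simpa using hk
  exact pow_le_pow_left₀ (sv_nonneg Y j) (sv_antitone Y hle) 2

lemma spec_resid : specNorm (Y - Ytrunc Y k) ≤ sVal Y (k + 1) := by
  apply specNorm_le_bound _ (sVal_nonneg Y k)
  intro v
  set B := sVal Y (k + 1) with hB
  set d : Fin n → ℝ := fun j => (inner ℝ (wvec Y j) (toE v) : ℝ) with hd
  have hcomp : ∀ a, ((Y - Ytrunc Y k) *ᵥ v) a = ∑ j ∈ (Fk n k)ᶜ, ccoef Y a j * d j := by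
    intro a
    have h1 : ∀ l, (Y - Ytrunc Y k) a l = ∑ j ∈ (Fk n k)ᶜ, ccoef Y a j * wvec Y j l := by
      intro l
      have h2 := congrFun (congrArg (WithLp.equiv 2 (Fin n → ℝ)) (row_resid Y k a)) l
      exact h2.trans (sum_smul_apply Y ((Fk n k)ᶜ) (ccoef Y a) l)
    calc ((Y - Ytrunc Y k) *ᵥ v) a = ∑ l, (Y - Ytrunc Y k) a l * v l := rfl
      _ = ∑ l, (∑ j ∈ (Fk n k)ᶜ, ccoef Y a j * wvec Y j l) * v l :=
          Finset.sum_congr rfl fun l _ => by rw [h1 l]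
      _ = ∑ j ∈ (Fk n k)ᶜ, ccoef Y a j * d j := by
          simp only [Finset.sum_mul]
          rw [Finset.sum_comm]
          refine Finset.sum_congr rfl fun j _ => ?_
          have h3 : d j = ∑ l, wvec Y j l * v l := by
            rw [show d j = (inner ℝ (wvec Y j) (toE v) : ℝ) from rfl,
              show wvec Y j = toE ((WithLp.equiv 2 (Fin n → ℝ)) (wvec Y j)) from rfl, inner_toE]
            rfl
          rw [h3, Finset.mul_sum]
          exact Finset.sum_congr rfl fun l _ => by ring
  have hnormsq : ‖toE ((Y - Ytrunc Y k) *ᵥ v)‖ ^ 2 ≤ (B * ‖toE v‖) ^ 2 := by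
    rw [norm_toE_sq]
    calc ∑ a, (((Y - Ytrunc Y k) *ᵥ v) a) ^ 2
        = ∑ a, (∑ j ∈ (Fk n k)ᶜ, ccoef Y a j * d j) ^ 2 :=
          Finset.sum_congr rfl fun a _ => by rw [hcomp a]
      _ = ∑ j ∈ (Fk n k)ᶜ, lam Y j * d j ^ 2 := by
          have hexp : ∀ a : Fin dout, (∑ j ∈ (Fk n k)ᶜ, ccoef Y a j * d j) ^ 2
              = ∑ j ∈ (Fk n k)ᶜ, ∑ j' ∈ (Fk n k)ᶜ,
                  (ccoef Y a j * ccoef Y a j') * (d j * d j') := by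
            intro a
            rw [sq, Finset.sum_mul_sum]
            exact Finset.sum_congr rfl fun j _ => Finset.sum_congr rfl fun j' _ => by ring
          calc ∑ a, (∑ j ∈ (Fk n k)ᶜ, ccoef Y a j * d j) ^ 2
              = ∑ a, ∑ j ∈ (Fk n k)ᶜ, ∑ j' ∈ (Fk n k)ᶜ,
                  (ccoef Y a j * ccoef Y a j') * (d j * d j') :=
                Finset.sum_congr rfl fun a _ => hexp a
            _ = ∑ j ∈ (Fk n k)ᶜ, ∑ j' ∈ (Fk n k)ᶜ,
                  (∑ a, ccoef Y a j * ccoef Y a j') * (d j * d j') := by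
                rw [Finset.sum_comm]
                refine Finset.sum_congr rfl fun j _ => ?_
                rw [Finset.sum_comm]
                refine Finset.sum_congr rfl fun j' _ => ?_
                rw [Finset.sum_mul]
            _ = ∑ j ∈ (Fk n k)ᶜ, lam Y j * d j ^ 2 := by
                refine Finset.sum_congr rfl fun j hj => ?_
                have hstep : ∀ j' ∈ (Fk n k)ᶜ,
                    (∑ a, ccoef Y a j * ccoef Y a j') * (d j * d j')
                      = if j' = j then lam Y j * d j ^ 2 else 0 := by
                  intro j' _
                  rw [sum_ccoef_mul]
                  by_cases h : j = j'
                  · subst h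
                    rw [if_pos rfl, if_pos rfl]
                    ring
                  · rw [if_neg h, if_neg (fun hc : j' = j => h hc.symm)]
                    ring
                rw [Finset.sum_congr rfl hstep,
                  Finset.sum_ite_eq' ((Fk n k)ᶜ) j (fun _ => lam Y j * d j ^ 2), if_pos hj]
      _ ≤ ∑ j ∈ (Fk n k)ᶜ, B ^ 2 * d j ^ 2 :=
          Finset.sum_le_sum fun j hj =>
            mul_le_mul_of_nonneg_right (lam_le_sVal_sq Y k j hj) (sq_nonneg _)
      _ = B ^ 2 * ∑ j ∈ (Fk n k)ᶜ, d j ^ 2 := by rw [Finset.mul_sum]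
      _ ≤ B ^ 2 * ∑ j, d j ^ 2 :=
          mul_le_mul_of_nonneg_left
            (Finset.sum_le_sum_of_subset_of_nonneg (Finset.subset_univ _)
              (fun j _ _ => sq_nonneg _)) (sq_nonneg _)
      _ = B ^ 2 * ‖toE v‖ ^ 2 := by rw [parseval Y (toE v)]
      _ = (B * ‖toE v‖) ^ 2 := by ring
  have h2 := Real.sqrt_le_sqrt hnormsq
  rwa [Real.sqrt_sq (norm_nonneg _),
    Real.sqrt_sq (mul_nonneg (sVal_nonneg Y k) (norm_nonneg _))] at h2

lemma specNorm_neg {m n : ℕ} (A : Matrix (Fin m) (Fin n) ℝ) : specNorm (-A) = specNorm A := by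
  unfold specNorm
  rw [map_neg, map_neg, norm_neg]

/-- Rows of a product `B * N` lie in the span of the rows of `N`. -/
lemma row_mul_mem {dout r n : ℕ} (BT : Matrix (Fin dout) (Fin r) ℝ)
    (N : Matrix (Fin r) (Fin n) ℝ) (S : Submodule ℝ (EuclideanSpace ℝ (Fin n)))
    (h : ∀ i, toE (N i) ∈ S) (a : Fin dout) : toE ((BT * N) a) ∈ S := by
  have h0 : (BT * N) a = ∑ i, BT a i • N i := by
    funext l
    simp [Matrix.mul_apply, Finset.sum_apply]
  have h1 : toE ((BT * N) a) = ∑ i, BT a i • toE (N i) := by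
    rw [h0]
    simp only [toE, map_sum, map_smul]
  rw [h1]
  exact Submodule.sum_mem _ fun i _ => Submodule.smul_mem _ _ (h i)

end TruncHelpers

/-- deterministic core of Theorem 2: if
`‖Y − B_T σ(A_T X) − G‖₂ ≤ ε`, `‖G‖₂ ≤ t`, and the infimum `E_σ(r)` is attained at
`(A*, B*)`, then
`‖B_T σ(A_T X) − B* σ(A* X)‖_F ≤ √(r+k)(t + ε + s_{k+1}(Y)) + s_{>k}(Y) + E_σ(r)`. -/
theorem stmt4 {din dout n r : ℕ} (k : ℕ)
    (X : Matrix (Fin din) (Fin n) ℝ) (Y : Matrix (Fin dout) (Fin n) ℝ)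
    (σ : ℝ → ℝ) (ε t : ℝ) (hε : 0 ≤ ε) (ht : 0 ≤ t)
    (AT : Matrix (Fin r) (Fin din) ℝ) (BT : Matrix (Fin dout) (Fin r) ℝ)
    (G : Matrix (Fin dout) (Fin n) ℝ)
    (hfit : specNorm (Y - BT * entrywise σ (AT * X) - G) ≤ ε)
    (hG : specNorm G ≤ t)
    (Astar : Matrix (Fin r) (Fin din) ℝ) (Bstar : Matrix (Fin dout) (Fin r) ℝ)
    (hopt : frobNorm (Y - Bstar * entrywise σ (Astar * X)) = Esig σ X Y r) :
    frobNorm (BT * entrywise σ (AT * X) - Bstar * entrywise σ (Astar * X)) ≤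
      Real.sqrt ((r : ℝ) + k) * (t + ε + sVal Y (k + 1)) + sGt Y k + Esig σ X Y r := by
  classical
  set N := entrywise σ (AT * X) with hN
  set M := BT * N with hM
  set Mstar := Bstar * entrywise σ (Astar * X) with hMstar
  set Yk := Ytrunc Y k with hYk
  set g : Fin k ⊕ Fin r → EuclideanSpace ℝ (Fin n) :=
    fun x => Sum.rec (fun j => if h : (j : ℕ) < n then wvec Y ⟨(j : ℕ), h⟩ else 0)
      (fun i => toE (N i)) x with hg
  set S := Submodule.span ℝ (Set.range g) with hS
  have hrowsYk : ∀ a, toE (Yk a) ∈ S := by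
    intro a
    rw [hYk, row_Ytrunc]
    refine Submodule.sum_mem _ fun j hj => Submodule.smul_mem _ _ (Submodule.subset_span ?_)
    have hjk : (j : ℕ) < k := by simpa [Fk] using hj
    refine ⟨Sum.inl ⟨(j : ℕ), hjk⟩, ?_⟩
    show (if h : ((⟨(j : ℕ), hjk⟩ : Fin k) : ℕ) < n then wvec Y ⟨_, h⟩ else 0) = wvec Y j
    rw [dif_pos (show ((⟨(j : ℕ), hjk⟩ : Fin k) : ℕ) < n from j.2)]
  have hrowsM : ∀ a, toE (M a) ∈ S :=
    fun a => row_mul_mem BT N S (fun i => Submodule.subset_span ⟨Sum.inr i, rfl⟩) a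
  have hrowsW : ∀ a, toE ((Yk - M) a) ∈ S := by
    intro a
    have h0 : toE ((Yk - M) a) = toE (Yk a) - toE (M a) := rfl
    rw [h0]
    exact Submodule.sub_mem _ (hrowsYk a) (hrowsM a)
  have hdim : (Module.finrank ℝ S : ℝ) ≤ (r : ℝ) + k := by
    have h1 : Module.finrank ℝ S ≤ Fintype.card (Fin k ⊕ Fin r) := finrank_range_le_card g
    rw [Fintype.card_sum, Fintype.card_fin, Fintype.card_fin] at h1
    have h2 : (Module.finrank ℝ S : ℝ) ≤ ((k + r : ℕ) : ℝ) := Nat.cast_le.mpr h1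
    push_cast at h2
    linarith
  have hYM : specNorm (Y - M) ≤ ε + t := by
    calc specNorm (Y - M) = specNorm ((Y - M - G) + G) := by rw [sub_add_cancel]
      _ ≤ specNorm (Y - M - G) + specNorm G := specNorm_add_le _ _
      _ ≤ ε + t := add_le_add hfit hG
  have hspecW : specNorm (Yk - M) ≤ t + ε + sVal Y (k + 1) := by
    have hdecomp : Yk - M = (Y - M) + (-(Y - Yk)) := by abel
    calc specNorm (Yk - M) = specNorm ((Y - M) + (-(Y - Yk))) := by rw [← hdecomp]
      _ ≤ specNorm (Y - M) + specNorm (-(Y - Yk)) := specNorm_add_le _ _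
      _ = specNorm (Y - M) + specNorm (Y - Yk) := by rw [specNorm_neg]
      _ ≤ (ε + t) + sVal Y (k + 1) := add_le_add hYM (spec_resid Y k)
      _ = t + ε + sVal Y (k + 1) := by ring
  have hfrobW : frobNorm (Yk - M) ≤ Real.sqrt ((r : ℝ) + k) * (t + ε + sVal Y (k + 1)) :=
    calc frobNorm (Yk - M)
        ≤ Real.sqrt (Module.finrank ℝ S) * specNorm (Yk - M) :=
          frob_le_sqrt_finrank_mul_spec _ S hrowsW
      _ ≤ Real.sqrt ((r : ℝ) + k) * (t + ε + sVal Y (k + 1)) :=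
          mul_le_mul (Real.sqrt_le_sqrt hdim) hspecW (specNorm_nonneg _) (Real.sqrt_nonneg _)
  have h5 : frobNorm (M - Mstar) ≤ frobNorm (Y - M) + frobNorm (Y - Mstar) := by
    have hdec : M - Mstar = (-(Y - M)) + (Y - Mstar) := by abel
    calc frobNorm (M - Mstar) = frobNorm ((-(Y - M)) + (Y - Mstar)) := by rw [← hdec]
      _ ≤ frobNorm (-(Y - M)) + frobNorm (Y - Mstar) := frobNorm_add_le _ _
      _ = frobNorm (Y - M) + frobNorm (Y - Mstar) := by rw [frobNorm_neg]
  have h6 : frobNorm (Y - M) ≤ frobNorm (Yk - M) + frobNorm (Y - Yk) := by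
    have hdec : Y - M = (Yk - M) + (Y - Yk) := by abel
    calc frobNorm (Y - M) = frobNorm ((Yk - M) + (Y - Yk)) := by rw [← hdec]
      _ ≤ frobNorm (Yk - M) + frobNorm (Y - Yk) := frobNorm_add_le _ _
  calc frobNorm (M - Mstar)
      ≤ (frobNorm (Yk - M) + frobNorm (Y - Yk)) + frobNorm (Y - Mstar) :=
        le_trans h5 (add_le_add_left h6 _)
    _ ≤ Real.sqrt ((r : ℝ) + k) * (t + ε + sVal Y (k + 1)) + sGt Y k + Esig σ X Y r := by
        rw [hYk, frob_resid, hMstar] at *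
        rw [← hopt]
        exact add_le_add_left (add_le_add_left hfrobW _) _

end

end CoLA
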